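/- arXiv:1904.08855 — 2 statements merged into one kernel-verified Lean document; each statement's English description precedes it below -/
import Mathlib

section
/- Suppose the load vector S satisfies ξ − η = 1. Define the scalar function f : [0,1] → ℝ by f(λ) := γ(λ) + 2λ²ξη, where γ(λ) := max_i ( 2λ(ξ_i + Re(η_i)) − λ²(ξ_i² + |η_i|²) ) is the value of the stress measure γ evaluated at the scaled load λ·S. Then f is monotonically nondecreasing on [0,1] (i.e., 0 ≤ λ₁ ≤ λ₂ ≤ 1 implies f(λ₁) ≤ f(λ₂)), and f(1) ≥ 1. -/
open Complex

/-- `η_i := Σ_j Ẑ_{ij} · conj(S_j)` -/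
noncomputable def etaI {n : ℕ} (Z : Matrix (Fin n) (Fin n) ℂ) (S : Fin n → ℂ) (i : Fin n) : ℂ :=
  ∑ j, Z i j * (starRingEnd ℂ) (S j)

/-- `ξ_i := Σ_j |Ẑ_{ij} · S_j|` -/
noncomputable def xiI {n : ℕ} (Z : Matrix (Fin n) (Fin n) ℂ) (S : Fin n → ℂ) (i : Fin n) : ℝ :=
  ∑ j, ‖Z i j * S j‖

/-- `γ_i := 2(ξ_i + Re η_i) − ξ_i² − |η_i|²` -/
noncomputable def gammaI {n : ℕ} (Z : Matrix (Fin n) (Fin n) ℂ) (S : Fin n → ℂ) (i : Fin n) : ℝ :=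
  2 * (xiI Z S i + (etaI Z S i).re) - (xiI Z S i) ^ 2 - (‖etaI Z S i‖) ^ 2

/-- `η := max_i |η_i|` -/
noncomputable def etaMax {n : ℕ} (Z : Matrix (Fin n) (Fin n) ℂ) (S : Fin n → ℂ) : ℝ :=
  ⨆ i, ‖etaI Z S i‖

/-- `ξ := max_i ξ_i` -/
noncomputable def xiMax {n : ℕ} (Z : Matrix (Fin n) (Fin n) ℂ) (S : Fin n → ℂ) : ℝ :=
  ⨆ i, xiI Z S i

/-- `γ := max_i γ_i` -/
noncomputable def gammaMax {n : ℕ} (Z : Matrix (Fin n) (Fin n) ℂ) (S : Fin n → ℂ) : ℝ :=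
  ⨆ i, gammaI Z S i

/-- `r̲ := sqrt((1−γ − sqrt((1−γ)² − 4ξ²η²))/(2ξ²))` -/
noncomputable def rLow {n : ℕ} (Z : Matrix (Fin n) (Fin n) ℂ) (S : Fin n → ℂ) : ℝ :=
  Real.sqrt ((1 - gammaMax Z S -
      Real.sqrt ((1 - gammaMax Z S) ^ 2 - 4 * (xiMax Z S) ^ 2 * (etaMax Z S) ^ 2)) /
    (2 * (xiMax Z S) ^ 2))

/-- `r̄ := sqrt((1−γ + sqrt((1−γ)² − 4ξ²η²))/(2ξ²))` -/
noncomputable def rHigh {n : ℕ} (Z : Matrix (Fin n) (Fin n) ℂ) (S : Fin n → ℂ) : ℝ :=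
  Real.sqrt ((1 - gammaMax Z S +
      Real.sqrt ((1 - gammaMax Z S) ^ 2 - 4 * (xiMax Z S) ^ 2 * (etaMax Z S) ^ 2)) /
    (2 * (xiMax Z S) ^ 2))

/-- the fixed point power flow map `F(v)_i := 1 − Σ_j Ẑ_{ij}·conj(S_j)/conj(v_j)` -/
noncomputable def pfMap {n : ℕ} (Z : Matrix (Fin n) (Fin n) ℂ) (S : Fin n → ℂ)
    (v : Fin n → ℂ) : Fin n → ℂ :=
  fun i => 1 - ∑ j, Z i j * (starRingEnd ℂ) (S j) / (starRingEnd ℂ) (v j)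

/-- `f(λ) := γ(λ·S) + 2λ²ξη` where `γ(λ·S) = max_i (2λ(ξ_i + Re η_i) − λ²(ξ_i² + |η_i|²))`. -/
noncomputable def fScale {n : ℕ} (Z : Matrix (Fin n) (Fin n) ℂ) (S : Fin n → ℂ) (l : ℝ) : ℝ :=
  (⨆ i, (2 * l * (xiI Z S i + (etaI Z S i).re)
      - l ^ 2 * ((xiI Z S i) ^ 2 + (‖etaI Z S i‖) ^ 2)))
    + 2 * l ^ 2 * xiMax Z S * etaMax Z S

/-- if `ξ − η = 1`, then `f(λ) = γ(λS) + 2λ²ξη` is monotonically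
nondecreasing on `[0, 1]` and `f(1) ≥ 1`. -/
theorem stress_increasing_along_loading {n : ℕ} (hn : 1 ≤ n)
    (Z : Matrix (Fin n) (Fin n) ℂ) (hZ : IsUnit Z.det)
    (S : Fin n → ℂ) (hxe : xiMax Z S - etaMax Z S = 1) :
    (∀ l1 l2 : ℝ, 0 ≤ l1 → l1 ≤ l2 → l2 ≤ 1 → fScale Z S l1 ≤ fScale Z S l2) ∧
    1 ≤ fScale Z S 1 := by
  haveI : Nonempty (Fin n) := ⟨⟨0, hn⟩⟩
  set ξ := xiMax Z S with hξdef
  set η := etaMax Z S with hηdef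
  have hbX : BddAbove (Set.range fun i => xiI Z S i) := (Set.finite_range _).bddAbove
  have hbE : BddAbove (Set.range fun i => ‖etaI Z S i‖) :=
    (Set.finite_range _).bddAbove
  have hx0 : ∀ i, 0 ≤ xiI Z S i := fun i =>
    Finset.sum_nonneg fun j _ => norm_nonneg _
  have hyx : ∀ i, ‖etaI Z S i‖ ≤ xiI Z S i := by
    intro i
    calc ‖etaI Z S i‖ ≤ ∑ j, ‖Z i j * (starRingEnd ℂ) (S j)‖ :=
          norm_sum_le _ _
      _ = xiI Z S i := by
          unfold xiI
          refine Finset.sum_congr rfl fun j _ => ?_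
          rw [norm_mul, norm_mul, Complex.norm_conj]
  have hre : ∀ i, -(‖etaI Z S i‖) ≤ (etaI Z S i).re := by
    intro i
    have h1 := Complex.abs_re_le_norm (etaI Z S i)
    have h2 := neg_abs_le (etaI Z S i).re
    linarith [abs_nonneg (etaI Z S i).re]
  have hxξ : ∀ i, xiI Z S i ≤ ξ := fun i => le_ciSup hbX i
  have hyη : ∀ i, ‖etaI Z S i‖ ≤ η := fun i => le_ciSup hbE i
  have hη0 : 0 ≤ η := le_trans (norm_nonneg _) (hyη (Classical.arbitrary _))
  have hξη : ξ = 1 + η := by linarith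
  -- pointwise monotonicity of each branch plus the quadratic correction
  have hpt : ∀ (l1 l2 : ℝ), 0 ≤ l1 → l1 ≤ l2 → l2 ≤ 1 → ∀ i,
      (2 * l1 * (xiI Z S i + (etaI Z S i).re)
        - l1 ^ 2 * ((xiI Z S i) ^ 2 + (‖etaI Z S i‖) ^ 2)) + 2 * l1 ^ 2 * ξ * η
      ≤ (2 * l2 * (xiI Z S i + (etaI Z S i).re)
        - l2 ^ 2 * ((xiI Z S i) ^ 2 + (‖etaI Z S i‖) ^ 2)) + 2 * l2 ^ 2 * ξ * η := by
    intro l1 l2 h10 h12 h21 i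
    set x := xiI Z S i
    set y := ‖etaI Z S i‖
    set r := (etaI Z S i).re
    have hy0 : 0 ≤ y := norm_nonneg _
    have hxx := hx0 i
    have hyx' := hyx i
    have hre' := hre i
    have hxξ' := hxξ i
    have hyη' := hyη i
    have key : 0 ≤ x + r + 2 * ξ * η - x ^ 2 - y ^ 2 := by
      nlinarith [mul_nonneg (sub_nonneg.2 hxξ') hxx,
        mul_nonneg (sub_nonneg.2 hyη') (by linarith : (0:ℝ) ≤ η + y + 1)]
    have hpos : 0 ≤ 2 * (x + r) - (l1 + l2) * (x ^ 2 + y ^ 2 - 2 * ξ * η) := by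
      rcases le_or_gt (x ^ 2 + y ^ 2 - 2 * ξ * η) 0 with hB | hB
      · nlinarith [mul_nonneg (by linarith : (0:ℝ) ≤ l1 + l2)
          (by linarith : (0:ℝ) ≤ -(x ^ 2 + y ^ 2 - 2 * ξ * η))]
      · nlinarith [mul_nonneg (by linarith : (0:ℝ) ≤ 2 - l1 - l2) hB.le]
    nlinarith [mul_nonneg (sub_nonneg.2 h12) hpos]
  constructor
  · intro l1 l2 h10 h12 h21
    have hb2 : BddAbove (Set.range fun i =>
        (2 * l2 * (xiI Z S i + (etaI Z S i).re)
          - l2 ^ 2 * ((xiI Z S i) ^ 2 + (‖etaI Z S i‖) ^ 2))) :=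
      (Set.finite_range _).bddAbove
    unfold fScale
    rw [← hξdef, ← hηdef]
    have hsup : (⨆ i, (2 * l1 * (xiI Z S i + (etaI Z S i).re)
          - l1 ^ 2 * ((xiI Z S i) ^ 2 + (‖etaI Z S i‖) ^ 2)))
        ≤ (⨆ i, (2 * l2 * (xiI Z S i + (etaI Z S i).re)
          - l2 ^ 2 * ((xiI Z S i) ^ 2 + (‖etaI Z S i‖) ^ 2)))
          + (2 * l2 ^ 2 * ξ * η - 2 * l1 ^ 2 * ξ * η) := by
      refine ciSup_le fun i => ?_
      have h1 := hpt l1 l2 h10 h12 h21 i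
      have h2 := le_ciSup hb2 i
      linarith
    linarith
  · obtain ⟨i, hi⟩ := Finite.exists_max (fun i => xiI Z S i)
    have hixi : xiI Z S i = ξ := le_antisymm (hxξ i) (ciSup_le fun j => hi j)
    have hb1 : BddAbove (Set.range fun i =>
        (2 * (1:ℝ) * (xiI Z S i + (etaI Z S i).re)
          - (1:ℝ) ^ 2 * ((xiI Z S i) ^ 2 + (‖etaI Z S i‖) ^ 2))) :=
      (Set.finite_range _).bddAbove
    have hle := le_ciSup hb1 i
    unfold fScale
    rw [← hξdef, ← hηdef]
    set y := ‖etaI Z S i‖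
    have hy0 : 0 ≤ y := norm_nonneg _
    have hre' := hre i
    have hyη' := hyη i
    have : 1 ≤ (2 * (1:ℝ) * (xiI Z S i + (etaI Z S i).re)
          - (1:ℝ) ^ 2 * ((xiI Z S i) ^ 2 + y ^ 2)) + 2 * 1 ^ 2 * ξ * η := by
      rw [hixi, hξη]
      nlinarith [mul_nonneg (sub_nonneg.2 hyη') (by linarith : (0:ℝ) ≤ η + y + 2)]
    linarith
end

section
/- If sqrt(ξ) + sqrt(η) ≤ 1, then γ + 2ξη ≤ 1 and ξ − η ≤ 1. Consequently, the solvability set certified by the condition of Dvijotham et al., S_d = {S ∈ ℂ^n : sqrt(ξ) + sqrt(η) ≤ 1}, is contained in the set {S ∈ ℂ^n : γ + 2ξη ≤ 1 and ξ − η ≤ 1} (the closed version of the proposed condition). -/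
open Complex

/-- `sqrt ξ + sqrt η ≤ 1` implies `γ + 2ξη ≤ 1` and `ξ − η ≤ 1`;
consequently the solvability set of Dvijotham et al. is contained in the closed
version of the proposed solvability set. -/
theorem dvijotham_condition_implies_proposed {n : ℕ} (hn : 1 ≤ n)
    (Z : Matrix (Fin n) (Fin n) ℂ) (hZ : IsUnit Z.det) :
    (∀ S : Fin n → ℂ, Real.sqrt (xiMax Z S) + Real.sqrt (etaMax Z S) ≤ 1 →
      gammaMax Z S + 2 * xiMax Z S * etaMax Z S ≤ 1 ∧ xiMax Z S - etaMax Z S ≤ 1) ∧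
    {S : Fin n → ℂ | Real.sqrt (xiMax Z S) + Real.sqrt (etaMax Z S) ≤ 1} ⊆
      {S : Fin n → ℂ |
        gammaMax Z S + 2 * xiMax Z S * etaMax Z S ≤ 1 ∧ xiMax Z S - etaMax Z S ≤ 1} := by
  haveI : Nonempty (Fin n) := ⟨⟨0, hn⟩⟩
  have key : ∀ S : Fin n → ℂ, Real.sqrt (xiMax Z S) + Real.sqrt (etaMax Z S) ≤ 1 →
      gammaMax Z S + 2 * xiMax Z S * etaMax Z S ≤ 1 ∧ xiMax Z S - etaMax Z S ≤ 1 := by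
    intro S hS
    set x := xiMax Z S with hxdef
    set e := etaMax Z S with hedef
    have hbddx : BddAbove (Set.range fun i => xiI Z S i) :=
      (Set.finite_range _).bddAbove
    have hbdde : BddAbove (Set.range fun i => ‖etaI Z S i‖) :=
      (Set.finite_range _).bddAbove
    have hxi_nonneg : ∀ i, 0 ≤ xiI Z S i := fun i =>
      Finset.sum_nonneg fun j _ => norm_nonneg _
    have hηξ : ∀ i, ‖etaI Z S i‖ ≤ xiI Z S i := by
      intro i
      calc ‖etaI Z S i‖ ≤ ∑ j, ‖Z i j * (starRingEnd ℂ) (S j)‖ :=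
            norm_sum_le _ _
        _ = xiI Z S i := by
            unfold xiI
            refine Finset.sum_congr rfl fun j _ => ?_
            simp [map_mul, Complex.norm_conj]
    have hxi_le : ∀ i, xiI Z S i ≤ x := fun i => le_ciSup hbddx i
    have heta_le : ∀ i, ‖etaI Z S i‖ ≤ e := fun i => le_ciSup hbdde i
    have hx0 : 0 ≤ x := (hxi_nonneg ⟨0, hn⟩).trans (hxi_le ⟨0, hn⟩)
    have he0 : 0 ≤ e := (norm_nonneg _).trans (heta_le ⟨0, hn⟩)
    have hsx : Real.sqrt x ^ 2 = x := Real.sq_sqrt hx0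
    have hse : Real.sqrt e ^ 2 = e := Real.sq_sqrt he0
    have hsx0 : 0 ≤ Real.sqrt x := Real.sqrt_nonneg _
    have hse0 : 0 ≤ Real.sqrt e := Real.sqrt_nonneg _
    have hx1 : x ≤ 1 := by nlinarith
    have he1 : e ≤ 1 := by nlinarith
    have hg : gammaMax Z S ≤ 2 * x - x ^ 2 + 2 * e - e ^ 2 := by
      refine ciSup_le fun i => ?_
      have h1 := hxi_le i
      have h2 := heta_le i
      have h3 := hxi_nonneg i
      have h4 := norm_nonneg (etaI Z S i)
      have h5 : (etaI Z S i).re ≤ ‖etaI Z S i‖ := Complex.re_le_norm _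
      unfold gammaI
      nlinarith [mul_nonneg (sub_nonneg.2 h1) (by linarith : 0 ≤ 2 - x - xiI Z S i),
        mul_nonneg (sub_nonneg.2 h2) (by linarith : 0 ≤ 2 - e - ‖etaI Z S i‖)]
    constructor
    · have hmain : 2 * x - x ^ 2 + 2 * e - e ^ 2 + 2 * x * e ≤ 1 := by
        nlinarith [mul_nonneg
          (by nlinarith : (0:ℝ) ≤ 1 - (Real.sqrt x + Real.sqrt e) ^ 2)
          (by nlinarith [mul_nonneg hsx0 hse0] : (0:ℝ) ≤ 1 - (Real.sqrt x - Real.sqrt e) ^ 2)]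
      linarith
    · linarith
  exact ⟨key, fun S hS => key S hS⟩
end
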